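/- Let G be a simple graph with vertex set V, v ∈ V, and G^v its local complement at v. Over the field GF(2), the adjacency matrix of G^v satisfies A(G^v) = ((A(G)+I_{v})*{v}) + I_{N_G(v)∪{v}}, where I_S denotes the diagonal 0-1 matrix with ones exactly at indices in S, and * is the principal pivot transform. -/

import Mathlib

open Matrix
open scoped symmDiff

variable {V F : Type*} [Fintype V] [DecidableEq V] [Field F]

/-- Nullity of a matrix: dimension of the kernel of the associated linear map. -/
noncomputable def nullity {F : Type*} [Field F] {m n : Type*} [Fintype m] [Fintype n]
    (M : Matrix m n F) : ℕ :=
  Module.finrank F (LinearMap.ker M.mulVecLin)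

/-- Submatrix A[X,Y]: rows indexed by X, columns by Y. -/
def subm (A : Matrix V V F) (X Y : Finset V) : Matrix X Y F :=
  A.submatrix Subtype.val Subtype.val

/-- Principal pivot transform of A on Z, defined blockwise. -/
noncomputable def ppt (A : Matrix V V F) (Z : Finset V) : Matrix V V F :=
  fun i j =>
    if hi : i ∈ Z then
      if hj : j ∈ Z then (subm A Z Z)⁻¹ ⟨i, hi⟩ ⟨j, hj⟩
      else - ∑ k : Z, (subm A Z Z)⁻¹ ⟨i, hi⟩ k * A k j
    else
      if hj : j ∈ Z then ∑ k : Z, A i k * (subm A Z Z)⁻¹ k ⟨j, hj⟩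
      else A i j - ∑ k : Z, ∑ l : Z, A i k * (subm A Z Z)⁻¹ k l * A l j

/-- Local complement of a simple graph G at a vertex v: complement the subgraph
induced on the neighborhood of v. -/
def localComp {V : Type*} (G : SimpleGraph V) (v : V) : SimpleGraph V where
  Adj a b := a ≠ b ∧ Xor (G.Adj a b) (G.Adj v a ∧ G.Adj v b)
  symm := by
    constructor
    rintro a b ⟨hne, h⟩
    refine ⟨hne.symm, ?_⟩
    rwa [G.adj_comm b a, and_comm]
  loopless := by constructor; rintro a ⟨h, -⟩; exact h rfl

instance {V : Type*} [DecidableEq V] (G : SimpleGraph V) [DecidableRel G.Adj] (v : V) :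
    DecidableRel (localComp G v).Adj :=
  fun a b => decidable_of_iff (a ≠ b ∧ Xor (G.Adj a b) (G.Adj v a ∧ G.Adj v b)) Iff.rfl

/-- Over GF(2): A(G^v) = ((A(G) + I_{v}) * {v}) + I_{N_G(v) ∪ {v}}. -/
theorem adjMatrix_localComp {V : Type*} [Fintype V] [DecidableEq V]
    (G : SimpleGraph V) [DecidableRel G.Adj] (v : V) :
    SimpleGraph.adjMatrix (ZMod 2) (localComp G v) =
      ppt (SimpleGraph.adjMatrix (ZMod 2) G +
            Matrix.diagonal (fun i => if i = v then (1 : ZMod 2) else 0)) {v} +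
      Matrix.diagonal
        (fun i => if i ∈ G.neighborFinset v ∪ {v} then (1 : ZMod 2) else 0) := by
  classical
  set A : Matrix V V (ZMod 2) := SimpleGraph.adjMatrix (ZMod 2) G with hA
  set M : Matrix V V (ZMod 2) := A +
      Matrix.diagonal (fun i => if i = v then (1 : ZMod 2) else 0) with hM
  haveI huniq : Unique (({v} : Finset V) : Type _) :=
    ⟨⟨⟨v, Finset.mem_singleton_self v⟩⟩, by
      rintro ⟨x, hx⟩
      simp only [Finset.mem_singleton] at hx
      simpa using hx⟩
  have hcoe : ∀ k : (({v} : Finset V) : Type _), (k : V) = v := by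
    rintro ⟨x, hx⟩; simpa using hx
  have hsub : subm M {v} {v} = 1 := by
    ext ⟨a, ha⟩ ⟨b, hb⟩
    simp only [Finset.mem_singleton] at ha hb
    subst ha; subst hb
    simp [subm, hM, hA, Matrix.one_apply]
  have hinv : (subm M {v} {v})⁻¹ = 1 := by rw [hsub, inv_one]
  have hone : ∀ a b : (({v} : Finset V) : Type _),
      (1 : Matrix (({v} : Finset V) : Type _) (({v} : Finset V) : Type _) (ZMod 2)) a b = 1 := by
    intro a b; rw [Subsingleton.elim a b, Matrix.one_apply_eq]
  have hMvv : M v v = 1 := by simp [hM, hA]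
  have hMv : ∀ j, j ≠ v → M v j = A v j := by
    intro j hj; simp [hM, Matrix.diagonal_apply_ne' _ hj]
  have hMv' : ∀ i, i ≠ v → M i v = A i v := by
    intro i hi; simp [hM, Matrix.diagonal_apply_ne _ hi]
  have hMo : ∀ i j, i ≠ v → M i j = A i j := by
    intro i j hi
    simp only [hM, Matrix.add_apply, Matrix.diagonal_apply, add_eq_left]
    split_ifs with h1 h2 <;> first | rfl | exact absurd h2 hi
  have e1 : ppt M {v} v v = 1 := by
    rw [ppt, dif_pos (Finset.mem_singleton_self v), dif_pos (Finset.mem_singleton_self v),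
      hinv, hone]
  have e2 : ∀ j, j ≠ v → ppt M {v} v j = A v j := by
    intro j hj
    rw [ppt, dif_pos (Finset.mem_singleton_self v),
      dif_neg (by simpa using hj : ¬ j ∈ ({v} : Finset V)), hinv]
    rw [Fintype.sum_unique, hone, one_mul, hcoe, hMv j hj]
    exact (CharTwo.neg_eq _)
  have e3 : ∀ i, i ≠ v → ppt M {v} i v = A i v := by
    intro i hi
    rw [ppt, dif_neg (by simpa using hi : ¬ i ∈ ({v} : Finset V)),
      dif_pos (Finset.mem_singleton_self v), hinv]
    rw [Fintype.sum_unique, hone, mul_one, hcoe, hMv' i hi]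
  have e4 : ∀ i j, i ≠ v → j ≠ v → ppt M {v} i j = A i j + A i v * A v j := by
    intro i j hi hj
    rw [ppt, dif_neg (by simpa using hi : ¬ i ∈ ({v} : Finset V)),
      dif_neg (by simpa using hj : ¬ j ∈ ({v} : Finset V)), hinv]
    rw [Fintype.sum_unique, Fintype.sum_unique, hone, mul_one, hcoe,
      hMo i j hi, hMv' i hi, hMv j hj, sub_eq_add_neg, CharTwo.neg_eq]
  funext i j
  rw [Matrix.add_apply]
  by_cases hi : i = v <;> by_cases hj : j = v
  · rw [hi, hj, e1, Matrix.diagonal_apply_eq]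
    rw [SimpleGraph.adjMatrix_apply]
    simp [hA, SimpleGraph.adjMatrix_apply, localComp]
    decide
  · have hvj : ¬ v = j := fun h => hj h.symm
    rw [hi, e2 j hj, Matrix.diagonal_apply_ne _ hvj]
    by_cases hadj : G.Adj v j <;>
      simp [hA, SimpleGraph.adjMatrix_apply, localComp, hadj, Xor, hvj]
  · rw [hj, e3 i hi, Matrix.diagonal_apply_ne _ hi]
    by_cases hadj : G.Adj i v <;> rw [SimpleGraph.adjMatrix_apply] <;>
      simp [hA, SimpleGraph.adjMatrix_apply, localComp, hadj, hi, G.adj_comm i v]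
  · rw [e4 i j hi hj]
    by_cases hij : i = j
    · subst hij
      rw [Matrix.diagonal_apply_eq]
      simp only [Finset.mem_union, Finset.mem_singleton, hi,
        SimpleGraph.mem_neighborFinset, or_false]
      by_cases hadj : G.Adj v i <;> rw [SimpleGraph.adjMatrix_apply] <;>
        simp [hA, SimpleGraph.adjMatrix_apply, localComp, hadj, G.adj_comm i v] <;> decide
    · rw [Matrix.diagonal_apply_ne _ hij]
      by_cases h1 : G.Adj i j <;> by_cases h2 : G.Adj v i <;> by_cases h3 : G.Adj v j <;>
        simp [hA, SimpleGraph.adjMatrix_apply, localComp, h1, h2, h3, hij, Xor,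
          G.adj_comm i v] <;> decide
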